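/- Let γ₁, γ₂ : ℝ → ℝ be differentiable class K functions, let L ∈ ℝ, and let α₁, α₂ : ℝ → ℝ be differentiable with α₁(0) = 0 and α₂(0) = 0. Suppose that for all h, u ∈ ℝ: α₁'(h)·u + α₂(u + α₁(h)) = L·(γ₁'(h)·u + γ₂(u + γ₁(h))). Then α₁'(0) + α₂'(0) = L·(γ₁'(0) + γ₂'(0)) and α₁'(0)·α₂'(0) = L·γ₁'(0)·γ₂'(0); consequently α₁'(0) and α₂'(0) are the two roots of the quadratic equation s² − L·G·s + L·γ₁'(0)·γ₂'(0) = 0, where G = γ₁'(0) + γ₂'(0). -/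
import Mathlib


/-- Computation in the proof of Lemma 2 of the paper: from the functional
equation, `α₁'(0)` and `α₂'(0)` have sum `L·(γ₁'(0) + γ₂'(0))` and product
`L·γ₁'(0)·γ₂'(0)`, hence are the two roots of
`s² - L·G·s + L·γ₁'(0)·γ₂'(0) = 0` with `G = γ₁'(0) + γ₂'(0)`. -/
theorem stmt_8 (γ₁ γ₂ α₁ α₂ : ℝ → ℝ) (L : ℝ)
    (hγ₁d : Differentiable ℝ γ₁) (hγ₁m : StrictMono γ₁) (hγ₁0 : γ₁ 0 = 0)
    (hγ₂d : Differentiable ℝ γ₂) (hγ₂m : StrictMono γ₂) (hγ₂0 : γ₂ 0 = 0)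
    (hα₁d : Differentiable ℝ α₁) (hα₂d : Differentiable ℝ α₂)
    (hα₁0 : α₁ 0 = 0) (hα₂0 : α₂ 0 = 0)
    (heq : ∀ h u : ℝ,
      deriv α₁ h * u + α₂ (u + α₁ h) = L * (deriv γ₁ h * u + γ₂ (u + γ₁ h))) :
    deriv α₁ 0 + deriv α₂ 0 = L * (deriv γ₁ 0 + deriv γ₂ 0) ∧
    deriv α₁ 0 * deriv α₂ 0 = L * (deriv γ₁ 0 * deriv γ₂ 0) ∧
    ∀ s ∈ ({deriv α₁ 0, deriv α₂ 0} : Set ℝ),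
      s ^ 2 - L * (deriv γ₁ 0 + deriv γ₂ 0) * s
        + L * (deriv γ₁ 0) * (deriv γ₂ 0) = 0 := by

  have hsum : deriv α₁ 0 + deriv α₂ 0 = L * (deriv γ₁ 0 + deriv γ₂ 0) := by
    have hfun : (fun u : ℝ => deriv α₁ 0 * u + α₂ u)
        = fun u : ℝ => L * (deriv γ₁ 0 * u + γ₂ u) := by
      funext u
      have := heq 0 u
      simpa [hα₁0, hγ₁0] using this
    have h1 : HasDerivAt (fun u : ℝ => deriv α₁ 0 * u + α₂ u)
        (deriv α₁ 0 * 1 + deriv α₂ 0) 0 :=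
      ((hasDerivAt_id 0).const_mul (deriv α₁ 0)).add (hα₂d 0).hasDerivAt
    have h2 : HasDerivAt (fun u : ℝ => L * (deriv γ₁ 0 * u + γ₂ u))
        (L * (deriv γ₁ 0 * 1 + deriv γ₂ 0)) 0 :=
      (((hasDerivAt_id 0).const_mul (deriv γ₁ 0)).add (hγ₂d 0).hasDerivAt).const_mul L
    rw [hfun] at h1
    have := h1.unique h2
    linarith [this]
  have hprod : deriv α₁ 0 * deriv α₂ 0 = L * (deriv γ₁ 0 * deriv γ₂ 0) := by
    have hfun : (fun h : ℝ => α₂ (α₁ h)) = fun h : ℝ => L * γ₂ (γ₁ h) := by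
      funext h
      have := heq h 0
      simpa using this
    have h1 : HasDerivAt (fun h : ℝ => α₂ (α₁ h)) (deriv α₂ 0 * deriv α₁ 0) 0 := by
      have := HasDerivAt.comp (x := (0:ℝ)) (h₂ := α₂) (h := α₁)
        (by rw [hα₁0]; exact (hα₂d 0).hasDerivAt) (hα₁d 0).hasDerivAt
      exact this
    have h2 : HasDerivAt (fun h : ℝ => L * γ₂ (γ₁ h)) (L * (deriv γ₂ 0 * deriv γ₁ 0)) 0 := by
      have := HasDerivAt.comp (x := (0:ℝ)) (h₂ := γ₂) (h := γ₁)
        (by rw [hγ₁0]; exact (hγ₂d 0).hasDerivAt) (hγ₁d 0).hasDerivAt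
      exact this.const_mul L
    rw [hfun] at h1
    have := h1.unique h2
    linarith [this]
  refine ⟨hsum, hprod, ?_⟩
  intro s hs
  rcases hs with hs | hs <;> subst hs
  · linear_combination deriv α₁ 0 * hsum - hprod
  · linear_combination deriv α₂ 0 * hsum - hprod
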